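/- Let E_1, E_2, E_3 be pairwise disjoint sets of edges on a vertex set V with E_1 and E_2 finite, let G_3 = (V, E_1 ∪ E_2 ∪ E_3) be locally finite, suppose the graph induced by E_2 is connected, and suppose its vertex set W is a separating surface between E_1 and E_3 in G_3 (every path in G_3 from an endpoint of an edge of E_1 to an endpoint of an edge of E_3 visits a vertex of W). If η is a random even configuration distributed according to UEG_{G_3}, then the random variables η|_{E_1} and η|_{E_3} are independent. -/

import Mathlib

open MeasureTheory
open scoped Classical

noncomputable section

instance : MeasurableSpace (ZMod 2) := ⊤

/-- The source (mod-2 boundary) of a configuration on a set `E` of edges, at a vertex `v`: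
the mod-2 number of open edges incident to `v`. -/
def srcAt {V : Type*} {E : Set (Sym2 V)} (ω : E → ZMod 2) (v : V) : ZMod 2 :=
  (Set.ncard {e : E | ω e = 1 ∧ v ∈ (e : Sym2 V)} : ZMod 2)

/-- A configuration is even (sourceless). -/
def IsEvenConf {V : Type*} {E : Set (Sym2 V)} (ω : E → ZMod 2) : Prop :=
  ∀ v : V, srcAt ω v = 0

/-- `μ` is the uniform even subgraph measure (the Haar probability measure on the
group of even configurations): a probability measure supported on even configurations
and invariant under translation (symmetric difference) by every even configuration. -/
def IsUEG {V : Type*} (E : Set (Sym2 V)) (μ : Measure (E → ZMod 2)) : Prop :=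
  IsProbabilityMeasure μ ∧ μ {ω | IsEvenConf ω} = 1 ∧
    ∀ γ : E → ZMod 2, IsEvenConf γ → Measure.map (fun ω => ω + γ) μ = μ

/-- The graph of open edges of a configuration. -/
def openGraph {V : Type*} {E : Set (Sym2 V)} (ω : E → ZMod 2) : SimpleGraph V :=
  SimpleGraph.fromEdgeSet {e : Sym2 V | ∃ h : e ∈ E, ω ⟨e, h⟩ = 1}

/-- The connected component of `v` in the graph of open edges is infinite. -/
def PercolatesAt {V : Type*} {E : Set (Sym2 V)} (ω : E → ZMod 2) (v : V) : Prop :=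
  {w : V | (openGraph ω).Reachable v w}.Infinite

/-- The hypercubic lattice `ℤ^d`. -/
def latticeGraph (d : ℕ) : SimpleGraph (Fin d → ℤ) where
  Adj u v := ∑ i, |u i - v i| = 1
  symm := ⟨fun u v h => by simpa [abs_sub_comm] using h⟩
  loopless := ⟨fun u h => by simp at h⟩

/-- Restriction of a configuration to a smaller edge set. -/
def restrictConf {V : Type*} {E' E : Set (Sym2 V)} (h : E' ⊆ E) (ω : E → ZMod 2) :
    E' → ZMod 2 := fun e => ω ⟨e.1, h e.2⟩

/-- The vertices that are endpoints of an edge of `E`. -/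
def eVerts {V : Type*} (E : Set (Sym2 V)) : Set V := {v | ∃ e ∈ E, v ∈ e}

section Aux

variable {V : Type} {E : Set (Sym2 V)}

/-- finiteness of incident edges, subtype form -/
lemma inc_finite (hlf : ∀ v : V, {e : Sym2 V | e ∈ E ∧ v ∈ e}.Finite) (v : V) :
    {e : ↥E | v ∈ (e : Sym2 V)}.Finite := by
  have : {e : ↥E | v ∈ (e : Sym2 V)} = (Subtype.val) ⁻¹' {e : Sym2 V | e ∈ E ∧ v ∈ e} := by
    ext e; simp [e.2]
  rw [this]
  exact Set.Finite.preimage (Subtype.val_injective.injOn) (hlf v)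

def incFinset (hlf : ∀ v : V, {e : Sym2 V | e ∈ E ∧ v ∈ e}.Finite) (v : V) : Finset ↥E :=
  (inc_finite hlf v).toFinset

lemma zmod2_eq_ite (x : ZMod 2) : x = if x = 1 then 1 else 0 := by revert x; decide

lemma srcAt_eq_sum (hlf : ∀ v : V, {e : Sym2 V | e ∈ E ∧ v ∈ e}.Finite)
    (ω : E → ZMod 2) (v : V) :
    srcAt ω v = ∑ e ∈ incFinset hlf v, ω e := by
  classical
  have h1 : {e : E | ω e = 1 ∧ v ∈ (e : Sym2 V)}
      = ↑((incFinset hlf v).filter (fun e => ω e = 1)) := by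
    ext e; simp [incFinset, inc_finite, Set.Finite.mem_toFinset, and_comm]
  rw [srcAt, h1, Set.ncard_coe_finset]
  rw [show (∑ e ∈ incFinset hlf v, ω e)
      = ∑ e ∈ incFinset hlf v, (if ω e = 1 then (1:ZMod 2) else 0) from
    Finset.sum_congr rfl (fun e _ => zmod2_eq_ite (ω e))]
  rw [Finset.sum_boole]


end Aux

variable {V : Type} {E : Set (Sym2 V)}

lemma srcAt_add (hlf : ∀ v : V, {e : Sym2 V | e ∈ E ∧ v ∈ e}.Finite)
    (ω γ : E → ZMod 2) (v : V) :
    srcAt (ω + γ) v = srcAt ω v + srcAt γ v := by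
  simp [srcAt_eq_sum hlf, Finset.sum_add_distrib]

lemma isEvenConf_add (hlf : ∀ v : V, {e : Sym2 V | e ∈ E ∧ v ∈ e}.Finite)
    {ω γ : E → ZMod 2} (hω : IsEvenConf ω) (hγ : IsEvenConf γ) :
    IsEvenConf (ω + γ) := fun v => by rw [srcAt_add hlf, hω v, hγ v, add_zero]

lemma isEvenConf_zero : IsEvenConf (fun _ => 0 : E → ZMod 2) := by
  intro v; simp [srcAt]

lemma exists_inc_of_srcAt_ne_zero (hlf : ∀ v : V, {e : Sym2 V | e ∈ E ∧ v ∈ e}.Finite)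
    {ω : E → ZMod 2} {v : V} (h : srcAt ω v ≠ 0) :
    ∃ e : E, v ∈ (e : Sym2 V) ∧ ω e ≠ 0 := by
  by_contra hc
  push_neg at hc
  apply h
  rw [srcAt_eq_sum hlf]
  refine Finset.sum_eq_zero (fun e he => ?_)
  exact hc e (by simpa [incFinset, inc_finite] using he)

open Classical in
/-- indicator configuration of a single raw edge -/
def singleConf (f : Sym2 V) : E → ZMod 2 := fun e => if (e : Sym2 V) = f then 1 else 0

open Classical in
/-- mod-2 edge count configuration of a walk -/
def walkConf {H : SimpleGraph V} {x y : V} (p : H.Walk x y) : E → ZMod 2 :=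
  fun e => ((p.edges.count (e : Sym2 V) : ℕ) : ZMod 2)

lemma srcAt_singleConf (hlf : ∀ v : V, {e : Sym2 V | e ∈ E ∧ v ∈ e}.Finite)
    {f : Sym2 V} (hf : f ∈ E) (u : V) :
    srcAt (singleConf f : E → ZMod 2) u = if u ∈ f then 1 else 0 := by
  classical
  rw [srcAt_eq_sum hlf]
  have : ∀ e ∈ incFinset hlf u, (singleConf f : E → ZMod 2) e
      = if e = (⟨f, hf⟩ : E) then 1 else 0 := by
    intro e _
    simp only [singleConf]
    congr 1
    simp [Subtype.ext_iff]
  rw [Finset.sum_congr rfl this, Finset.sum_ite_eq' (incFinset hlf u) (⟨f, hf⟩ : E) (fun _ => 1)]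
  simp [incFinset, inc_finite]



lemma mem_sym2_ite {a b u : V} (hab : a ≠ b) :
    (if u ∈ s(a, b) then (1 : ZMod 2) else 0)
      = (if u = a then 1 else 0) + (if u = b then 1 else 0) := by
  by_cases ha : u = a
  · subst ha; simp [Sym2.mem_iff, hab]
  · by_cases hb : u = b
    · subst hb; simp [Sym2.mem_iff, ha]
    · simp [Sym2.mem_iff, ha, hb]

lemma srcAt_walkConf (hlf : ∀ v : V, {e : Sym2 V | e ∈ E ∧ v ∈ e}.Finite)
    {H : SimpleGraph V} (hHE : H.edgeSet ⊆ E) {x y : V} (p : H.Walk x y) (u : V) :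
    srcAt (walkConf p : E → ZMod 2) u
      = (if u = x then 1 else 0) + (if u = y then 1 else 0) := by
  induction p with
  | nil =>
      rename_i z
      have h0 : srcAt (walkConf (SimpleGraph.Walk.nil : H.Walk z z) : E → ZMod 2) u = 0 := by
        rw [srcAt_eq_sum hlf]
        exact Finset.sum_eq_zero (fun e _ => by simp [walkConf])
      rw [h0]
      have key : ∀ p : ZMod 2, (0 : ZMod 2) = p + p := by decide
      exact key _
  | @cons a b c hab q ih =>
      have hsplit : (walkConf (SimpleGraph.Walk.cons hab q) : E → ZMod 2)
          = (singleConf s(a, b) : E → ZMod 2) + walkConf q := by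
        funext e
        simp only [walkConf, SimpleGraph.Walk.edges_cons, List.count_cons, Nat.cast_add,
          Pi.add_apply, singleConf]
        rw [add_comm]
        congr 1
        by_cases h : (e : Sym2 V) = s(a, b)
        · simp [h]
        · simp [h, Ne.symm h]
      rw [hsplit, srcAt_add hlf, srcAt_singleConf hlf (hHE (H.mem_edgeSet.mpr hab)), ih,
        mem_sym2_ite hab.ne]
      have key : ∀ p q r : ZMod 2, p + q + (q + r) = p + r := by decide
      exact key _ _ _

lemma walkConf_eq_zero_of_not_mem {H : SimpleGraph V} {x y : V} (p : H.Walk x y)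
    {e : E} (he : (e : Sym2 V) ∉ H.edgeSet) : (walkConf p : E → ZMod 2) e = 0 := by
  have : p.edges.count (e : Sym2 V) = 0 :=
    List.count_eq_zero.mpr (fun hc => he (p.edges_subset_edgeSet hc))
  simp [walkConf, this]

/-- handshake: the sum of sources over a vertex set covering a finite support is zero -/
lemma sum_srcAt_eq_zero (hlf : ∀ v : V, {e : Sym2 V | e ∈ E ∧ v ∈ e}.Finite)
    (hsimple : ∀ e : ↥E, ¬(e : Sym2 V).IsDiag) (ω : E → ZMod 2)
    (F : Finset ↥E) (hsupp : ∀ e, ω e ≠ 0 → e ∈ F)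
    (T : Finset V) (hT : ∀ e ∈ F, ∀ v, v ∈ (e : Sym2 V) → v ∈ T) :
    ∑ v ∈ T, srcAt ω v = 0 := by
  have step1 : ∀ v ∈ T, srcAt ω v = ∑ e ∈ F, (if v ∈ (e : Sym2 V) then ω e else 0) := by
    intro v _
    rw [srcAt_eq_sum hlf, ← Finset.sum_filter]
    have hsub : F.filter (fun e : ↥E => v ∈ (e : Sym2 V)) ⊆ incFinset hlf v := by
      intro e he
      simp only [Finset.mem_filter] at he
      simp [incFinset, inc_finite, he.2]
    refine (Finset.sum_subset hsub (fun e he hne => ?_)).symm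
    by_contra hne0
    exact hne (Finset.mem_filter.mpr ⟨hsupp e hne0, by simpa [incFinset, inc_finite] using he⟩)
  rw [Finset.sum_congr rfl step1, Finset.sum_comm]
  refine Finset.sum_eq_zero (fun e he => ?_)
  obtain ⟨a, b, hab⟩ : ∃ a b, (e : Sym2 V) = s(a, b) := (e : Sym2 V).ind (fun x y => ⟨x, y, rfl⟩)
  have hne : a ≠ b := by
    intro h
    exact hsimple e (by rw [hab, Sym2.mk_isDiag_iff]; exact h)
  have hfil : T.filter (fun v : V => v ∈ (e : Sym2 V)) = {a, b} := by
    ext v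
    simp only [Finset.mem_filter, Finset.mem_insert, Finset.mem_singleton, hab, Sym2.mem_iff]
    constructor
    · exact fun h => h.2
    · rintro (rfl | rfl)
      · exact ⟨hT e he _ (by rw [hab]; exact Sym2.mem_mk_left _ _), Or.inl rfl⟩
      · exact ⟨hT e he _ (by rw [hab]; exact Sym2.mem_mk_right _ _), Or.inr rfl⟩
  rw [← Finset.sum_filter, hfil]
  have hcard : ({a, b} : Finset V).card = 2 := by
    rw [Finset.card_insert_of_notMem (by simpa using hne), Finset.card_singleton]
  rw [Finset.sum_const, hcard, two_smul]
  have key : ∀ x : ZMod 2, x + x = 0 := by decide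
  exact key _

lemma sym2_mem_finite (e : Sym2 V) : {v : V | v ∈ e}.Finite := by
  induction e using Sym2.ind with
  | _ a b =>
      have : {v : V | v ∈ s(a, b)} = {a, b} := by ext v; simp [Sym2.mem_iff]
      rw [this]; exact (Set.finite_singleton _).insert _

lemma everts_finite {E1 : Set (Sym2 V)} (h1fin : E1.Finite) : (eVerts E1).Finite := by
  have : eVerts E1 ⊆ ⋃ e ∈ E1, {v : V | v ∈ e} := by
    intro v ⟨e, he, hv⟩
    exact Set.mem_biUnion he hv
  exact Set.Finite.subset (Set.Finite.biUnion h1fin (fun e _ => sym2_mem_finite e)) this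

lemma srcAt_finsum (hlf : ∀ v : V, {e : Sym2 V | e ∈ E ∧ v ∈ e}.Finite)
    {ι : Type*} (s : Finset ι) (g : ι → (E → ZMod 2)) (u : V) :
    srcAt (∑ i ∈ s, g i) u = ∑ i ∈ s, srcAt (g i) u := by
  rw [srcAt_eq_sum hlf]
  simp only [Finset.sum_apply]
  rw [Finset.sum_comm]
  exact Finset.sum_congr rfl (fun i _ => (srcAt_eq_sum hlf (g i) u).symm)

/-- The gluing lemma: any even configuration can be modified, keeping it even,
so that it is unchanged on `E1` and vanishes on `E3`. -/
lemma gluing {E1 E2 E3 : Set (Sym2 V)}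
    (hd12 : Disjoint E1 E2) (hd13 : Disjoint E1 E3) (hd23 : Disjoint E2 E3)
    (h1fin : E1.Finite)
    (hsimple : ∀ e ∈ E1 ∪ E2 ∪ E3, ¬ e.IsDiag)
    (hlf : ∀ v : V, {e : Sym2 V | e ∈ E1 ∪ E2 ∪ E3 ∧ v ∈ e}.Finite)
    (hWne : (eVerts E2).Nonempty)
    (hWconn : ∀ x ∈ eVerts E2, ∀ y ∈ eVerts E2,
      (SimpleGraph.fromEdgeSet E2).Reachable x y)
    (hsep : ∀ x y : V, x ∈ eVerts E1 → y ∈ eVerts E3 →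
      ∀ p : (SimpleGraph.fromEdgeSet (E1 ∪ E2 ∪ E3)).Walk x y,
        ∃ w ∈ eVerts E2, w ∈ p.support)
    {δ : ↥(E1 ∪ E2 ∪ E3) → ZMod 2} (hδ : IsEvenConf δ) :
    ∃ θ : ↥(E1 ∪ E2 ∪ E3) → ZMod 2, IsEvenConf θ ∧
      (∀ e : ↥(E1 ∪ E2 ∪ E3), (e : Sym2 V) ∈ E1 → θ e = δ e) ∧
      (∀ e : ↥(E1 ∪ E2 ∪ E3), (e : Sym2 V) ∈ E3 → θ e = 0) := by
  have hsimpleE : ∀ e : ↥(E1 ∪ E2 ∪ E3), ¬(e : Sym2 V).IsDiag := fun e => hsimple e e.2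
  -- the restriction of δ to E1
  set ζ : ↥(E1 ∪ E2 ∪ E3) → ZMod 2 :=
    fun e => if (e : Sym2 V) ∈ E1 then δ e else 0 with hζ
  have hζ_app : ∀ e : ↥(E1 ∪ E2 ∪ E3),
      ζ e = if (e : Sym2 V) ∈ E1 then δ e else 0 := fun e => rfl
  -- support of ζ
  have hE1subfin : {e : ↥(E1 ∪ E2 ∪ E3) | (e : Sym2 V) ∈ E1}.Finite :=
    Set.Finite.preimage (Subtype.val_injective.injOn) h1fin
  set F : Finset ↥(E1 ∪ E2 ∪ E3) := hE1subfin.toFinset with hF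
  have hsupp : ∀ e : ↥(E1 ∪ E2 ∪ E3), ζ e ≠ 0 → e ∈ F := by
    intro e he
    by_contra hc
    apply he
    rw [hζ_app, if_neg (by simpa [hF, Set.Finite.mem_toFinset] using hc)]
  -- the source set S of ζ
  set S : Set V := {v | srcAt ζ v = 1} with hS
  have hSsub1 : S ⊆ eVerts E1 := by
    intro v hv
    obtain ⟨e, hve, hne⟩ := exists_inc_of_srcAt_ne_zero hlf (by rw [hv]; exact one_ne_zero)
    have he1 : (e : Sym2 V) ∈ E1 := by
      by_contra hc
      exact hne (by rw [hζ_app]; exact if_neg hc)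
    exact ⟨e, he1, hve⟩
  have hSfin : S.Finite := Set.Finite.subset (everts_finite h1fin) hSsub1
  -- S is contained in the separating surface
  have hSsubW : S ⊆ eVerts E2 := by
    intro v hv
    have hv1 : v ∈ eVerts E1 := hSsub1 hv
    have h2 : srcAt (δ + ζ) v ≠ 0 := by
      rw [srcAt_add hlf, hδ v, zero_add, hv]
      exact one_ne_zero
    obtain ⟨e, hve, hne⟩ := exists_inc_of_srcAt_ne_zero hlf h2
    have he1 : (e : Sym2 V) ∉ E1 := by
      intro hc
      apply hne
      have hz : ζ e = δ e := by rw [hζ_app]; exact if_pos hc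
      show δ e + ζ e = 0
      rw [hz]
      have key : ∀ x : ZMod 2, x + x = 0 := by decide
      exact key _
    rcases e.2 with (h1 | h2') | h3
    · exact absurd h1 he1
    · exact ⟨e, h2', hve⟩
    · obtain ⟨w, hw, hws⟩ := hsep v v hv1 ⟨e, h3, hve⟩ SimpleGraph.Walk.nil
      rw [SimpleGraph.Walk.support_nil, List.mem_singleton] at hws
      exact hws ▸ hw
  -- cardinality of S is even
  set Sfin : Finset V := hSfin.toFinset with hSfinset
  set T : Finset V := (everts_finite h1fin).toFinset with hT
  have hsum0 : ∑ v ∈ T, srcAt ζ v = 0 := by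
    refine sum_srcAt_eq_zero hlf hsimpleE ζ F hsupp T ?_
    intro e he v hv
    have he1 : (e : Sym2 V) ∈ E1 := by simpa [hF, Set.Finite.mem_toFinset] using he
    simp only [hT, Set.Finite.mem_toFinset]
    exact ⟨e, he1, hv⟩
  have hStop : Finset.filter (fun v : V => srcAt ζ v = 1) T = Sfin := by
    ext v
    simp only [Finset.mem_filter, hT, hSfinset, Set.Finite.mem_toFinset]
    constructor
    · exact fun h => h.2
    · intro h; exact ⟨hSsub1 h, h⟩
  have hScard : ((Sfin.card : ℕ) : ZMod 2) = 0 := by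
    have : ∑ v ∈ T, srcAt ζ v = ∑ v ∈ T, (if srcAt ζ v = 1 then (1 : ZMod 2) else 0) :=
      Finset.sum_congr rfl (fun v _ => zmod2_eq_ite _)
    rw [this, Finset.sum_boole, hStop] at hsum0
    exact hsum0
  -- the correcting configuration
  obtain ⟨w0, hw0⟩ := hWne
  have hedgesub : (SimpleGraph.fromEdgeSet E2).edgeSet ⊆ E1 ∪ E2 ∪ E3 := by
    rw [SimpleGraph.edgeSet_fromEdgeSet]
    exact fun e he => Or.inl (Or.inr he.1)
  set g : V → (↥(E1 ∪ E2 ∪ E3) → ZMod 2) := fun v =>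
    if hv : v ∈ eVerts E2 then walkConf (hWconn v hv w0 hw0).some else 0 with hg
  have hgpos : ∀ v (hv : v ∈ eVerts E2),
      g v = walkConf (hWconn v hv w0 hw0).some := by
    intro v hv
    rw [hg]
    exact dif_pos hv
  set τ : ↥(E1 ∪ E2 ∪ E3) → ZMod 2 := ∑ v ∈ Sfin, g v with hτ
  have hτ_src : ∀ u : V, srcAt τ u
      = (if u ∈ Sfin then (1 : ZMod 2) else 0) := by
    intro u
    rw [hτ, srcAt_finsum hlf]
    have hterm : ∀ v ∈ Sfin, srcAt (g v) u
        = (if u = v then (1 : ZMod 2) else 0) + (if u = w0 then 1 else 0) := by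
      intro v hv
      have hvS : v ∈ S := by simpa [hSfinset, Set.Finite.mem_toFinset] using hv
      rw [hgpos v (hSsubW hvS)]
      exact srcAt_walkConf hlf hedgesub _ u
    rw [Finset.sum_congr rfl hterm, Finset.sum_add_distrib,
      Finset.sum_ite_eq Sfin u (fun _ => 1),
      Finset.sum_const, nsmul_eq_mul, hScard, zero_mul, add_zero]
  have hτ_off : ∀ e : ↥(E1 ∪ E2 ∪ E3), (e : Sym2 V) ∉ E2 → τ e = 0 := by
    intro e he
    rw [hτ, Finset.sum_apply]
    refine Finset.sum_eq_zero (fun v hv => ?_)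
    have hvS : v ∈ S := by simpa [hSfinset, Set.Finite.mem_toFinset] using hv
    rw [hgpos v (hSsubW hvS)]
    refine walkConf_eq_zero_of_not_mem _ ?_
    rw [SimpleGraph.edgeSet_fromEdgeSet]
    exact fun hc => he hc.1
  refine ⟨ζ + τ, ?_, ?_, ?_⟩
  · intro u
    rw [srcAt_add hlf, hτ_src u]
    by_cases hu : u ∈ Sfin
    · have h1 : srcAt ζ u = 1 := by simpa [hSfinset, Set.Finite.mem_toFinset, hS] using hu
      rw [h1, if_pos hu]
      decide
    · have h1 : srcAt ζ u ≠ 1 := by simpa [hSfinset, Set.Finite.mem_toFinset, hS] using hu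
      have h0 : srcAt ζ u = 0 := by
        rcases (by decide : ∀ x : ZMod 2, x = 0 ∨ x = 1) (srcAt ζ u) with h | h
        · exact h
        · exact absurd h h1
      rw [h0, if_neg hu, add_zero]
  · intro e he
    have ht : τ e = 0 := hτ_off e (Set.disjoint_left.mp hd12 he)
    show ζ e + τ e = δ e
    rw [ht, add_zero, hζ_app, if_pos he]
  · intro e he
    have ht : τ e = 0 := hτ_off e (fun hc => Set.disjoint_left.mp hd23 hc he)
    show ζ e + τ e = 0
    rw [ht, add_zero, hζ_app, if_neg (Set.disjoint_left.mp hd13 · he)]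

instance : TopologicalSpace (ZMod 2) := ⊥
instance : DiscreteTopology (ZMod 2) := ⟨rfl⟩
instance : IsTopologicalAddGroup (ZMod 2) where
  continuous_add := continuous_of_discreteTopology
  continuous_neg := continuous_of_discreteTopology
instance : BorelSpace (ZMod 2) := ⟨borel_eq_top_of_discrete.symm⟩

lemma measurable_add_conf (γ : E → ZMod 2) :
    Measurable (fun ω : E → ZMod 2 => ω + γ) := by
  refine measurable_pi_lambda _ (fun e => ?_)
  have h1 : Measurable (fun x : ZMod 2 => x + γ e) := measurable_from_top
  exact h1.comp (measurable_pi_apply e)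

lemma continuous_srcAt (hlf : ∀ v : V, {e : Sym2 V | e ∈ E ∧ v ∈ e}.Finite) (v : V) :
    Continuous (fun ω : E → ZMod 2 => srcAt ω v) := by
  have : Continuous (fun ω : E → ZMod 2 => ∑ e ∈ incFinset hlf v, ω e) :=
    continuous_finset_sum _ (fun e _ => continuous_apply e)
  exact this.congr (fun ω => (srcAt_eq_sum hlf ω v).symm)

/-- Existence of the uniform even subgraph measure (Haar measure on the group of
even configurations). -/
lemma exists_isUEG (hlf : ∀ v : V, {e : Sym2 V | e ∈ E ∧ v ∈ e}.Finite) :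
    ∃ μ : Measure (E → ZMod 2),
      IsProbabilityMeasure μ ∧ μ {ω | IsEvenConf ω} = 1 ∧
        ∀ γ : E → ZMod 2, IsEvenConf γ → Measure.map (fun ω => ω + γ) μ = μ := by
  classical
  have hzero : IsEvenConf (0 : E → ZMod 2) := isEvenConf_zero
  set Ω : AddSubgroup (E → ZMod 2) :=
    { carrier := {ω | IsEvenConf ω}
      add_mem' := fun hω hγ => isEvenConf_add hlf hω hγ
      zero_mem' := hzero
      neg_mem' := fun {ω} hω => by
        have : -ω = ω := by
          funext e
          have : ∀ x : ZMod 2, -x = x := by decide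
          exact this _
        rw [this]; exact hω } with hΩ
  have hclosed : IsClosed (Ω : Set (E → ZMod 2)) := by
    have : (Ω : Set (E → ZMod 2)) = ⋂ v : V, (fun ω => srcAt ω v) ⁻¹' {0} := by
      ext ω
      simp only [Set.mem_iInter, Set.mem_preimage, Set.mem_singleton_iff]
      rfl
    rw [this]
    exact isClosed_iInter (fun v => IsClosed.preimage (continuous_srcAt hlf v) isClosed_singleton)
  haveI : CompactSpace ↥Ω := isCompact_iff_compactSpace.mp hclosed.isCompact
  haveI : Nonempty ↥Ω := ⟨⟨0, hzero⟩⟩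
  letI : MeasurableSpace ↥Ω := borel ↥Ω
  haveI : BorelSpace ↥Ω := ⟨rfl⟩
  set ν : Measure ↥Ω := Measure.addHaarMeasure (⊤ : TopologicalSpace.PositiveCompacts ↥Ω) with hν
  haveI hνprob : IsProbabilityMeasure ν := by
    constructor
    rw [← TopologicalSpace.PositiveCompacts.coe_top (α := ↥Ω), hν]
    exact Measure.addHaarMeasure_self
  have hval : Measurable (Subtype.val : ↥Ω → (E → ZMod 2)) := by
    refine measurable_pi_lambda _ (fun e => ?_)
    exact (Continuous.measurable ((continuous_apply e).comp continuous_subtype_val))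
  haveI hmapprob : IsProbabilityMeasure (Measure.map (Subtype.val : ↥Ω → (E → ZMod 2)) ν) :=
    Measure.isProbabilityMeasure_map hval.aemeasurable
  refine ⟨Measure.map Subtype.val ν, hmapprob, ?_, ?_⟩
  · refine le_antisymm prob_le_one ?_
    have h1 : ν ((Subtype.val : ↥Ω → (E → ZMod 2)) ⁻¹' {ω : E → ZMod 2 | IsEvenConf ω}) = 1 := by
      have h2 : ((Subtype.val : ↥Ω → (E → ZMod 2)) ⁻¹' {ω : E → ZMod 2 | IsEvenConf ω})
          = Set.univ := by
        ext ω
        simp only [Set.mem_preimage, Set.mem_univ, iff_true, Set.mem_setOf_eq]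
        exact ω.2
      rw [h2]; exact measure_univ
    calc (1 : ENNReal)
        = ν ((Subtype.val : ↥Ω → (E → ZMod 2)) ⁻¹' {ω : E → ZMod 2 | IsEvenConf ω}) := h1.symm
      _ ≤ Measure.map Subtype.val ν {ω : E → ZMod 2 | IsEvenConf ω} :=
          Measure.le_map_apply hval.aemeasurable _
  · intro γ hγ
    set γ' : ↥Ω := ⟨γ, hγ⟩ with hγ'
    have haddmeas : Measurable (fun ω : ↥Ω => ω + γ') :=
      (continuous_id.add continuous_const).measurable
    rw [Measure.map_map (measurable_add_conf γ) hval,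
      show (fun ω : E → ZMod 2 => ω + γ) ∘ Subtype.val
          = Subtype.val ∘ (fun ω : ↥Ω => ω + γ') from rfl,
      ← Measure.map_map hval haddmeas,
      show (fun ω : ↥Ω => ω + γ') = (fun ω : ↥Ω => γ' + ω) from funext (fun ω => add_comm _ _),
      MeasureTheory.map_add_left_eq_self ν γ']

instance : MeasurableSingletonClass (ZMod 2) := ⟨fun _ => trivial⟩

lemma measurable_restrictConf {V : Type} {E' E : Set (Sym2 V)} (h : E' ⊆ E) :
    Measurable (restrictConf h) :=
  measurable_pi_lambda _ (fun e => measurable_pi_apply _)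

lemma restrictConf_add {V : Type} {E' E : Set (Sym2 V)} (h : E' ⊆ E)
    (ω γ : E → ZMod 2) : restrictConf h (ω + γ) = restrictConf h ω + restrictConf h γ := rfl

lemma ueg_indep_aux {V : Type} {E1 E2 E3 : Set (Sym2 V)}
    (hd12 : Disjoint E1 E2) (hd13 : Disjoint E1 E3) (hd23 : Disjoint E2 E3)
    (h1fin : E1.Finite)
    (hsimple : ∀ e ∈ E1 ∪ E2 ∪ E3, ¬ e.IsDiag)
    (hlf : ∀ v : V, {e : Sym2 V | e ∈ E1 ∪ E2 ∪ E3 ∧ v ∈ e}.Finite)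
    (hWne : (eVerts E2).Nonempty)
    (hWconn : ∀ x ∈ eVerts E2, ∀ y ∈ eVerts E2,
      (SimpleGraph.fromEdgeSet E2).Reachable x y)
    (hsep : ∀ x y : V, x ∈ eVerts E1 → y ∈ eVerts E3 →
      ∀ p : (SimpleGraph.fromEdgeSet (E1 ∪ E2 ∪ E3)).Walk x y,
        ∃ w ∈ eVerts E2, w ∈ p.support)
    (h1sub : E1 ⊆ E1 ∪ E2 ∪ E3) (h3sub : E3 ⊆ E1 ∪ E2 ∪ E3)
    (μ : Measure (↥(E1 ∪ E2 ∪ E3) → ZMod 2))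
    (hprob : IsProbabilityMeasure μ)
    (heven : μ {ω | IsEvenConf ω} = 1)
    (hinv : ∀ γ : ↥(E1 ∪ E2 ∪ E3) → ZMod 2, IsEvenConf γ →
      Measure.map (fun ω => ω + γ) μ = μ)
    (A : Set (E1 → ZMod 2)) (B : Set (E3 → ZMod 2))
    (hA : MeasurableSet A) (hB : MeasurableSet B) :
    μ (restrictConf h1sub ⁻¹' A ∩ restrictConf h3sub ⁻¹' B)
      = μ (restrictConf h1sub ⁻¹' A) * μ (restrictConf h3sub ⁻¹' B) := by
  classical
  haveI : Fintype ↥E1 := h1fin.fintype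
  haveI : Fintype (↥E1 → ZMod 2) := Pi.instFintype
  set r1 := restrictConf h1sub with hr1
  set r3 := restrictConf h3sub with hr3
  have hmr1 : Measurable r1 := measurable_restrictConf h1sub
  have hmr3 : Measurable r3 := measurable_restrictConf h3sub
  set B' : Set (↥(E1 ∪ E2 ∪ E3) → ZMod 2) := r3 ⁻¹' B with hB'def
  have hB' : MeasurableSet B' := hmr3 hB
  set T : (↥E1 → ZMod 2) → Set (↥(E1 ∪ E2 ∪ E3) → ZMod 2) := fun a => r1 ⁻¹' {a} with hTdef
  have hTmeas : ∀ a, MeasurableSet (T a) := fun a => hmr1 (measurableSet_singleton a)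
  -- translation invariance on measurable sets
  have htrans : ∀ θ : ↥(E1 ∪ E2 ∪ E3) → ZMod 2, IsEvenConf θ →
      ∀ S : Set (↥(E1 ∪ E2 ∪ E3) → ZMod 2), MeasurableSet S →
        μ ((fun ω => ω + θ) ⁻¹' S) = μ S := by
    intro θ hθ S hS
    conv_rhs => rw [← hinv θ hθ]
    rw [Measure.map_apply (measurable_add_conf θ) hS]
  -- the achievable restrictions
  set K : Set (↥E1 → ZMod 2) := {a | ∃ ω, IsEvenConf ω ∧ r1 ω = a} with hK
  -- null sets for unachievable restrictions
  have hadd1 : ∀ ω γ, r1 (ω + γ) = r1 ω + r1 γ := fun _ _ => rfl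
  have hadd3 : ∀ ω γ, r3 (ω + γ) = r3 ω + r3 γ := fun _ _ => rfl
  have hnull : ∀ a, a ∉ K → μ (T a) = 0 := by
    intro a ha
    have hsub : {ω : ↥(E1 ∪ E2 ∪ E3) → ZMod 2 | IsEvenConf ω} ⊆ (T a)ᶜ := by
      intro ω hω hc
      exact ha ⟨ω, hω, hc⟩
    have h1 : μ ((T a)ᶜ) = 1 :=
      le_antisymm prob_le_one (heven ▸ measure_mono hsub)
    have h2 : μ (T a) + μ ((T a)ᶜ) = μ Set.univ := measure_add_measure_compl (hTmeas a)
    rw [h1, measure_univ] at h2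
    have h3 : μ (T a) + 1 = 0 + 1 := by rw [h2, zero_add]
    exact (ENNReal.add_left_inj (by simp)).mp h3
  -- translation between achievable values
  have hmove : ∀ a b, a ∈ K → b ∈ K →
      ∀ S : Set (↥(E1 ∪ E2 ∪ E3) → ZMod 2), MeasurableSet S → (∀ ω θ, r3 θ = 0 →
        (ω + θ ∈ S ↔ ω ∈ S)) →
        μ (T a ∩ S) = μ (T b ∩ S) := by
    intro a b ha hb S hS hSinv
    obtain ⟨ω, hω, hωa⟩ := ha
    obtain ⟨ω', hω', hωb⟩ := hb
    obtain ⟨θ, hθeven, hθ1, hθ3⟩ := gluing hd12 hd13 hd23 h1fin hsimple hlf hWne hWconn hsep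
      (isEvenConf_add hlf hω hω')
    have hθr1 : r1 θ = a + b := by
      funext e
      show θ ⟨e.1, h1sub e.2⟩ = (a + b) e
      rw [hθ1 ⟨e.1, h1sub e.2⟩ e.2, ← hωa, ← hωb]
      rfl
    have hθr3 : r3 θ = 0 := by
      funext e
      exact hθ3 ⟨e.1, h3sub e.2⟩ e.2
    have hpre : (fun ω'' => ω'' + θ) ⁻¹' (T b ∩ S) = T a ∩ S := by
      ext ω''
      simp only [Set.mem_preimage, Set.mem_inter_iff, hTdef, Set.mem_singleton_iff]
      rw [hSinv ω'' θ hθr3]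
      have key : r1 (ω'' + θ) = b ↔ r1 ω'' = a := by
        rw [hadd1, hθr1]
        constructor
        · intro h1
          funext i
          have hpt := congrFun h1 i
          have hz : ∀ x y z : ZMod 2, x + (y + z) = z → x = y := by decide
          exact hz _ _ _ hpt
        · intro h1
          rw [h1]
          funext i
          have hz : ∀ s t : ZMod 2, s + (s + t) = t := by decide
          exact hz _ _
      rw [key]
    calc μ (T a ∩ S) = μ ((fun ω'' => ω'' + θ) ⁻¹' (T b ∩ S)) := by rw [hpre]
      _ = μ (T b ∩ S) := htrans θ hθeven _ ((hTmeas b).inter hS)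
  -- decomposition of measures by the restriction to E1
  have hdecomp : ∀ (X : Set (↥E1 → ZMod 2)) (C : Set (↥(E1 ∪ E2 ∪ E3) → ZMod 2)),
      MeasurableSet C →
      μ (r1 ⁻¹' X ∩ C) = ∑ a ∈ (Set.toFinite X).toFinset, μ (T a ∩ C) := by
    intro X C hC
    have hun : r1 ⁻¹' X ∩ C = ⋃ a ∈ (Set.toFinite X).toFinset, (T a ∩ C) := by
      ext ω
      simp only [Set.mem_inter_iff, Set.mem_preimage, Set.mem_iUnion, hTdef,
        Set.mem_singleton_iff, Set.Finite.mem_toFinset]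
      constructor
      · rintro ⟨h1, h2⟩; exact ⟨r1 ω, h1, rfl, h2⟩
      · rintro ⟨a, haX, rfl, h2⟩; exact ⟨haX, h2⟩
    rw [hun]
    refine measure_biUnion_finset ?_ (fun a _ => (hTmeas a).inter hC)
    intro a _ b _ hab
    refine Set.disjoint_left.mpr ?_
    rintro ω h1 h2
    exact hab ((h1.1 : r1 ω = a).symm.trans (h2.1 : r1 ω = b))
  have h0K : (0 : ↥E1 → ZMod 2) ∈ K := ⟨0, isEvenConf_zero, funext fun e => rfl⟩
  set c := μ (T 0) with hc
  set d := μ (T 0 ∩ B') with hd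
  have hBinv : ∀ ω θ, r3 θ = 0 → (ω + θ ∈ B' ↔ ω ∈ B') := by
    intro ω θ h3
    have h4 : r3 (ω + θ) = r3 ω := by rw [hadd3, h3, add_zero]
    simp only [hB'def, Set.mem_preimage, h4]
  have hUinv : ∀ ω θ, r3 θ = 0 →
      (ω + θ ∈ (Set.univ : Set (↥(E1 ∪ E2 ∪ E3) → ZMod 2)) ↔ ω ∈ Set.univ) := by simp
  have hμT : ∀ a, μ (T a) = if a ∈ K then c else 0 := by
    intro a
    by_cases ha : a ∈ K
    · rw [if_pos ha, hc]
      have := hmove a 0 ha h0K Set.univ MeasurableSet.univ hUinv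
      simpa [Set.inter_univ] using this
    · rw [if_neg ha]; exact hnull a ha
  have hμTB : ∀ a, μ (T a ∩ B') = if a ∈ K then d else 0 := by
    intro a
    by_cases ha : a ∈ K
    · rw [if_pos ha, hd]; exact hmove a 0 ha h0K B' hB' hBinv
    · rw [if_neg ha]
      exact le_antisymm ((measure_mono Set.inter_subset_left).trans (hnull a ha).le) zero_le
  have hsum : ∀ (X : Set (↥E1 → ZMod 2)) (x : ENNReal),
      (∑ a ∈ (Set.toFinite X).toFinset, if a ∈ K then x else 0)
        = (((Set.toFinite X).toFinset.filter (· ∈ K)).card : ENNReal) * x := by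
    intro X x
    rw [← Finset.sum_filter, Finset.sum_const, nsmul_eq_mul]
  set n := (((Set.toFinite A).toFinset.filter (· ∈ K)).card : ENNReal) with hn
  set m := (((Set.toFinite (Set.univ : Set (↥E1 → ZMod 2))).toFinset.filter
    (· ∈ K)).card : ENNReal) with hm
  have hA'B : μ (r1 ⁻¹' A ∩ B') = n * d := by
    rw [hdecomp A B' hB', Finset.sum_congr rfl (fun a _ => hμTB a), hsum]
  have hA' : μ (r1 ⁻¹' A) = n * c := by
    have h5 : r1 ⁻¹' A = r1 ⁻¹' A ∩ Set.univ := (Set.inter_univ _).symm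
    have step : ∀ a : ↥E1 → ZMod 2, μ (T a ∩ Set.univ) = if a ∈ K then c else 0 := by
      intro a; rw [Set.inter_univ]; exact hμT a
    rw [h5, hdecomp A Set.univ MeasurableSet.univ, Finset.sum_congr rfl (fun a _ => step a), hsum]
  have hBfull : μ B' = m * d := by
    have h5 : B' = r1 ⁻¹' Set.univ ∩ B' := by rw [Set.preimage_univ, Set.univ_inter]
    rw [h5, hdecomp Set.univ B' hB', Finset.sum_congr rfl (fun a _ => hμTB a), hsum]
  have hone : m * c = 1 := by
    have h5 := hdecomp Set.univ Set.univ MeasurableSet.univ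
    have step : ∀ a : ↥E1 → ZMod 2, μ (T a ∩ Set.univ) = if a ∈ K then c else 0 := by
      intro a; rw [Set.inter_univ]; exact hμT a
    rw [Set.preimage_univ, Set.univ_inter, measure_univ,
      Finset.sum_congr rfl (fun a _ => step a), hsum] at h5
    exact h5.symm
  have hfin : (n * c) * (m * d) = n * d := by
    have h5 : (n * c) * (m * d) = (n * d) * (m * c) := by ring
    rw [h5, hone, mul_one]
  rw [hA'B, hA', hBfull, hfin]

theorem ueg_independence_across_separating_surface {V : Type}
    (E1 E2 E3 : Set (Sym2 V))
    (hd12 : Disjoint E1 E2) (hd13 : Disjoint E1 E3) (hd23 : Disjoint E2 E3)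
    (h1fin : E1.Finite) (h2fin : E2.Finite)
    (hsimple : ∀ e ∈ E1 ∪ E2 ∪ E3, ¬ e.IsDiag)
    (hlf : ∀ v : V, {e : Sym2 V | e ∈ E1 ∪ E2 ∪ E3 ∧ v ∈ e}.Finite)
    (hWne : (eVerts E2).Nonempty)
    (hWconn : ∀ x ∈ eVerts E2, ∀ y ∈ eVerts E2,
      (SimpleGraph.fromEdgeSet E2).Reachable x y)
    (hsep : ∀ x y : V, x ∈ eVerts E1 → y ∈ eVerts E3 →
      ∀ p : (SimpleGraph.fromEdgeSet (E1 ∪ E2 ∪ E3)).Walk x y,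
        ∃ w ∈ eVerts E2, w ∈ p.support) :
    (∃ μ, IsUEG (E1 ∪ E2 ∪ E3) μ) ∧
    ∀ μ, IsUEG (E1 ∪ E2 ∪ E3) μ →
      ∀ (A : Set (E1 → ZMod 2)) (B : Set (E3 → ZMod 2)),
        MeasurableSet A → MeasurableSet B →
        μ (restrictConf (Set.subset_union_left.trans Set.subset_union_left :
              E1 ⊆ E1 ∪ E2 ∪ E3) ⁻¹' A
            ∩ restrictConf (Set.subset_union_right : E3 ⊆ E1 ∪ E2 ∪ E3) ⁻¹' B)
          = μ (restrictConf (Set.subset_union_left.trans Set.subset_union_left :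
              E1 ⊆ E1 ∪ E2 ∪ E3) ⁻¹' A)
            * μ (restrictConf (Set.subset_union_right : E3 ⊆ E1 ∪ E2 ∪ E3) ⁻¹' B) := by
  constructor
  · obtain ⟨μ, h1, h2, h3⟩ := exists_isUEG (E := E1 ∪ E2 ∪ E3) hlf
    exact ⟨μ, h1, h2, h3⟩
  · rintro μ ⟨hprob, heven, hinv⟩ A B hA hB
    exact ueg_indep_aux hd12 hd13 hd23 h1fin hsimple hlf hWne hWconn hsep _ _ μ
      hprob heven hinv A B hA hB
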